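/- Let A be the MIR random attribution matrix for a partition B of {1,...,n}, with E[A] = S the bag-averaging matrix. Then for any fixed θ* and X, E[‖(A − I)Xθ*‖²] = 2‖ỹ‖² − 2 ∑_{l=1}^m (∑_{i∈B_l} ỹ_i)²/|B_l|, where ỹ = Xθ*. -/

import Mathlib

open Finset Matrix MeasureTheory

/-- The distribution of the representatives `J : Fin m → Fin n`: independently for each bag
`B_l = {i : bag i = l}`, `J l` is uniform on `B_l`. -/
noncomputable def attribMeasure (n m : ℕ) (bag : Fin n → Fin m)
    (hsurj : Function.Surjective bag) : Measure (Fin m → Fin n) :=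
  Measure.pi fun l => (PMF.uniformOfFinset (univ.filter fun i => bag i = l)
    (by obtain ⟨i, hi⟩ := hsurj l; exact ⟨i, by simp [hi]⟩)).toMeasure

/-- with `ỹ = Xθ*`,
`E[‖(A − I)Xθ*‖²] = 2‖ỹ‖² − 2 ∑_l (∑_{i∈B_l} ỹ_i)²/|B_l|`. -/
theorem expected_A_minus_I (n m d : ℕ) (bag : Fin n → Fin m)
    (hsurj : Function.Surjective bag)
    (X : Matrix (Fin n) (Fin d) ℝ) (θstar : Fin d → ℝ)
    (ytil : Fin n → ℝ) (hy : ytil = X.mulVec θstar) :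
    ∫ J, ∑ i : Fin n,
        ((((Matrix.of fun i j : Fin n => if j = J (bag i) then (1 : ℝ) else 0)
            - (1 : Matrix (Fin n) (Fin n) ℝ)).mulVec (X.mulVec θstar)) i) ^ 2
      ∂(attribMeasure n m bag hsurj)
      = 2 * ∑ i : Fin n, (ytil i) ^ 2
        - 2 * ∑ l : Fin m, (∑ i ∈ univ.filter (fun i => bag i = l), ytil i) ^ 2 /
            ((univ.filter fun i => bag i = l).card : ℝ) := by
  subst hy
  set y := X.mulVec θstar with hy
  set c : Fin m → ℝ := fun l => ((univ.filter fun i => bag i = l).card : ℝ) with hcdef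
  have hcpos : ∀ l, 0 < c l := by
    intro l
    obtain ⟨i, hi⟩ := hsurj l
    have : 0 < (univ.filter fun i => bag i = l).card :=
      Finset.card_pos.mpr ⟨i, by simp [hi]⟩
    simp only [hcdef]
    exact_mod_cast this
  have hcne : ∀ l, c l ≠ 0 := fun l => (hcpos l).ne'
  -- pointwise form of the integrand
  have hpt : ∀ (J : Fin m → Fin n) (i : Fin n),
      (((Matrix.of fun i j : Fin n => if j = J (bag i) then (1:ℝ) else 0)
        - (1 : Matrix (Fin n) (Fin n) ℝ)).mulVec y) i = y (J (bag i)) - y i := by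
    intro J i
    simp [Matrix.sub_mulVec, Matrix.one_mulVec, Matrix.mulVec, dotProduct,
      Matrix.one_apply, sub_mul, ite_mul, Finset.sum_sub_distrib,
      Finset.sum_ite_eq', Finset.sum_ite_eq]
  -- weight of a singleton
  have hμ : ∀ J : Fin m → Fin n,
      ((attribMeasure n m bag hsurj) {J}).toReal
        = ∏ l, (if bag (J l) = l then (c l)⁻¹ else 0) := by
    intro J
    rw [attribMeasure, ← Set.univ_pi_singleton, Measure.pi_pi, ENNReal.toReal_prod]
    refine Finset.prod_congr rfl fun l _ => ?_
    rw [PMF.toMeasure_apply_singleton _ _ (measurableSet_singleton _),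
      PMF.uniformOfFinset_apply]
    simp only [Finset.mem_filter, Finset.mem_univ, true_and]
    split_ifs with h
    · simp [hcdef]
    · simp
  haveI : IsProbabilityMeasure (attribMeasure n m bag hsurj) := by
    unfold attribMeasure; infer_instance
  rw [integral_fintype (Integrable.of_finite)]
  simp only [hpt, smul_eq_mul, Measure.real, hμ, Finset.mul_sum]
  rw [Finset.sum_comm]
  -- key product-of-sums identity
  have key : ∀ (h : Fin m → Fin n → ℝ),
      ∑ J : Fin m → Fin n, ∏ l, h l (J l) = ∏ l, ∑ j, h l j := by
    intro h
    rw [Finset.prod_univ_sum]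
    simp [Fintype.piFinset_univ]
  -- per-index expectation
  have per : ∀ i : Fin n,
      ∑ J : Fin m → Fin n, (∏ l, (if bag (J l) = l then (c l)⁻¹ else 0))
          * (y (J (bag i)) - y i) ^ 2
        = (c (bag i))⁻¹ * ∑ j ∈ univ.filter (fun j => bag j = bag i), (y j - y i) ^ 2 := by
    intro i
    have h1 : ∀ J : Fin m → Fin n,
        (∏ l, (if bag (J l) = l then (c l)⁻¹ else 0)) * (y (J (bag i)) - y i) ^ 2
          = ∏ l, ((if bag (J l) = l then (c l)⁻¹ else 0)
              * (if l = bag i then (y (J l) - y i) ^ 2 else 1)) := by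
      intro J
      rw [Finset.prod_mul_distrib]
      congr 1
      rw [Finset.prod_ite_eq' Finset.univ (bag i) (fun l => (y (J l) - y i) ^ 2)]
      simp
    simp only [h1]
    rw [key (fun l j => (if bag j = l then (c l)⁻¹ else 0)
      * (if l = bag i then (y j - y i) ^ 2 else 1))]
    have h2 : ∀ l : Fin m, (∑ j, (if bag j = l then (c l)⁻¹ else 0)
        * (if l = bag i then (y j - y i) ^ 2 else 1))
        = if l = bag i then (c (bag i))⁻¹ * ∑ j ∈ univ.filter (fun j => bag j = bag i), (y j - y i) ^ 2
          else 1 := by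
      intro l
      split_ifs with h
      · subst h
        simp only [ite_mul, zero_mul]
        rw [← Finset.sum_filter, Finset.mul_sum]
      · simp only [if_neg h, mul_one]
        rw [← Finset.sum_filter, Finset.sum_const, hcdef]
        simp [mul_inv_cancel₀ (hcne l), hcdef]
        exact mul_inv_cancel₀ (hcne l)
    simp only [h2]
    rw [Finset.prod_ite_eq' Finset.univ (bag i)
      (fun _ => (c (bag i))⁻¹ * ∑ j ∈ univ.filter (fun j => bag j = bag i), (y j - y i) ^ 2)]
    simp
  simp only [per]
  -- group the outer sum by bags
  rw [← Finset.sum_fiberwise Finset.univ bag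
    (fun i => (c (bag i))⁻¹ * ∑ j ∈ univ.filter (fun j => bag j = bag i), (y j - y i) ^ 2)]
  have hbag : ∀ l : Fin m,
      ∑ i ∈ univ.filter (fun i => bag i = l),
        (c (bag i))⁻¹ * ∑ j ∈ univ.filter (fun j => bag j = bag i), (y j - y i) ^ 2
      = 2 * (∑ i ∈ univ.filter (fun i => bag i = l), (y i) ^ 2)
        - 2 * (∑ i ∈ univ.filter (fun i => bag i = l), y i) ^ 2 / c l := by
    intro l
    have : ∀ i ∈ univ.filter (fun i => bag i = l),
        (c (bag i))⁻¹ * ∑ j ∈ univ.filter (fun j => bag j = bag i), (y j - y i) ^ 2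
        = (c l)⁻¹ * ∑ j ∈ univ.filter (fun j => bag j = l), (y j - y i) ^ 2 := by
      intro i hi
      simp only [Finset.mem_filter] at hi
      rw [hi.2]
    rw [Finset.sum_congr rfl this, ← Finset.mul_sum]
    have expand : ∑ i ∈ univ.filter (fun i => bag i = l),
        ∑ j ∈ univ.filter (fun j => bag j = l), (y j - y i) ^ 2
        = 2 * c l * (∑ i ∈ univ.filter (fun i => bag i = l), (y i) ^ 2)
          - 2 * (∑ i ∈ univ.filter (fun i => bag i = l), y i) ^ 2 := by
      have : ∀ i j : Fin n, (y j - y i) ^ 2 = y j ^ 2 - 2 * (y j * y i) + y i ^ 2 := by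
        intro i j; ring
      simp only [this, Finset.sum_add_distrib, Finset.sum_sub_distrib, Finset.sum_const,
        ← Finset.mul_sum, ← Finset.sum_mul, smul_eq_mul, nsmul_eq_mul]
      rw [sq (∑ i ∈ univ.filter (fun i => bag i = l), y i)]
      push_cast [hcdef]
      ring
    rw [expand]
    have halg : ∀ a S2 S12 : ℝ, a ≠ 0 →
        a⁻¹ * (2 * a * S2 - 2 * S12) = 2 * S2 - 2 * S12 / a := by
      intro a S2 S12 ha
      field_simp
    exact halg (c l) _ _ (hcne l)
  rw [Finset.sum_congr rfl (fun l _ => hbag l), Finset.sum_sub_distrib]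
  have e1 : ∑ l : Fin m, 2 * ∑ i ∈ univ.filter (fun i => bag i = l), (y i) ^ 2
      = 2 * ∑ i : Fin n, (y i) ^ 2 := by
    rw [← Finset.mul_sum, Finset.sum_fiberwise Finset.univ bag (fun i => (y i) ^ 2)]
  rw [e1]
  congr 1
  rw [Finset.mul_sum]
  refine Finset.sum_congr rfl fun l _ => ?_
  simp only [hcdef]
  rw [mul_div_assoc]
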